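/- (de Bruijn) Let B be a set of integers such that every integer n has a unique representation as a sum of finitely many distinct elements of B, i.e., for every n ∈ ℤ there is exactly one finite subset S ⊆ B with Σ_{b∈S} b = n. Then B contains exactly one odd integer. -/

import Mathlib

/-- (de Bruijn) Let `B` be a set of integers such that every integer `n` has a unique
representation as a sum of finitely many distinct elements of `B`. Then `B` contains
exactly one odd integer. -/
theorem stmt_11 (B : Set ℤ)
    (h : ∀ n : ℤ, ∃! S : Finset ℤ, ↑S ⊆ B ∧ ∑ b ∈ S, b = n) :
    ∃! b : ℤ, b ∈ B ∧ Odd b := by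
  classical
  choose S hspec using h
  have hsub : ∀ n, ↑(S n) ⊆ B := fun n => (hspec n).1.1
  have hsum : ∀ n, ∑ b ∈ S n, b = n := fun n => (hspec n).1.2
  have huniq : ∀ (n : ℤ) (T : Finset ℤ), ↑T ⊆ B → (∑ b ∈ T, b) = n → S n = T := by
    intro n T h1 h2
    exact ((hspec n).2 T ⟨h1, h2⟩).symm
  -- flip lemma : for x ∈ B, x ∈ S (n + x) ↔ x ∉ S n
  have flip : ∀ (x : ℤ), x ∈ B → ∀ n, x ∈ S (n + x) ↔ x ∉ S n := by
    intro x hx n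
    by_cases hmem : x ∈ S n
    · simp only [hmem, not_true, iff_false]
      intro hmem'
      have hsub' : ↑((S (n + x)).erase x) ⊆ B :=
        subset_trans (Finset.coe_subset.mpr (Finset.erase_subset _ _)) (hsub (n + x))
      have hsum' : (∑ b ∈ (S (n + x)).erase x, b) = n := by
        have h1 := Finset.sum_erase_add (S (n + x)) (fun y => y) hmem'
        have h2 := hsum (n + x)
        omega
      have := huniq n _ hsub' hsum'
      rw [this] at hmem
      exact (Finset.notMem_erase x _) hmem
    · simp only [hmem, not_false_iff, iff_true]
      have hins : ↑(insert x (S n)) ⊆ B := by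
        rw [Finset.coe_insert]
        exact Set.insert_subset hx (hsub n)
      have hs : (∑ b ∈ insert x (S n), b) = n + x := by
        rw [Finset.sum_insert hmem, hsum n]; ring
      rw [huniq (n + x) _ hins hs]
      exact Finset.mem_insert_self x _
  -- main uniqueness core: any two odd members of B are equal
  have key : ∀ b c : ℤ, b ∈ B → c ∈ B → Odd b → Odd c → b = c := by
    intro b c hbB hcB hbO hcO
    by_contra hne
    have hcb : c ≠ b := fun e => hne e.symm
    -- cross lemma
    have crossv : ∀ n, b ∉ S n → (c ∈ S (n + b) ↔ c ∈ S n) := by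
      intro n hu
      have hins : ↑(insert b (S n)) ⊆ B := by
        rw [Finset.coe_insert]
        exact Set.insert_subset hbB (hsub n)
      have hs : (∑ x ∈ insert b (S n), x) = n + b := by
        rw [Finset.sum_insert hu, hsum n]; ring
      rw [huniq (n + b) _ hins hs, Finset.mem_insert]
      simp [hcb]
    have flipu : ∀ n, b ∈ S (n + b) ↔ b ∉ S n := flip b hbB
    have flipv : ∀ n, c ∈ S (n + c) ↔ c ∉ S n := flip c hcB
    have u2 : ∀ m, b ∈ S (m + 2 * b) ↔ b ∈ S m := by
      intro m
      have e : m + 2 * b = (m + b) + b := by ring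
      rw [e, flipu (m + b), flipu m]
      tauto
    have v2 : ∀ m, c ∈ S (m + 2 * c) ↔ c ∈ S m := by
      intro m
      have e : m + 2 * c = (m + c) + c := by ring
      rw [e, flipv (m + c), flipv m]
      tauto
    have uper : ∀ (t : ℤ) (n : ℤ), b ∈ S (n + t * (2 * b)) ↔ b ∈ S n := by
      intro t
      induction t using Int.induction_on with
      | zero => intro n; norm_num
      | succ k ih =>
        intro n
        have e : n + ((k : ℤ) + 1) * (2 * b) = (n + (k : ℤ) * (2 * b)) + 2 * b := by ring
        rw [e, u2 _]
        exact ih n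
      | pred k ih =>
        intro n
        have e : (n + (-(k : ℤ) - 1) * (2 * b)) + 2 * b = n + (-(k : ℤ)) * (2 * b) := by ring
        have h2 := u2 (n + (-(k : ℤ) - 1) * (2 * b))
        rw [e] at h2
        exact h2.symm.trans (ih n)
    have vper : ∀ (t : ℤ) (n : ℤ), c ∈ S (n + t * (2 * c)) ↔ c ∈ S n := by
      intro t
      induction t using Int.induction_on with
      | zero => intro n; norm_num
      | succ k ih =>
        intro n
        have e : n + ((k : ℤ) + 1) * (2 * c) = (n + (k : ℤ) * (2 * c)) + 2 * c := by ring
        rw [e, v2 _]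
        exact ih n
      | pred k ih =>
        intro n
        have e : (n + (-(k : ℤ) - 1) * (2 * c)) + 2 * c = n + (-(k : ℤ)) * (2 * c) := by ring
        have h2 := v2 (n + (-(k : ℤ) - 1) * (2 * c))
        rw [e] at h2
        exact h2.symm.trans (ih n)
    -- Bezout: find k odd and j with b * k = c + 2 * c * j
    have hcne : c ≠ 0 := by rintro rfl; exact (by simp : ¬ Odd (0:ℤ)) hcO
    obtain ⟨k, j, hkj⟩ : ∃ k j : ℤ, b * k = c + 2 * c * j := by
      set g : ℕ := Int.gcd b (2 * c) with hg
      have hg1 : (g : ℤ) ∣ b := Int.gcd_dvd_left b (2 * c)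
      have hg2 : (g : ℤ) ∣ 2 * c := Int.gcd_dvd_right b (2 * c)
      have godd : Odd (g : ℤ) := by
        rcases hg1 with ⟨r, hr⟩
        rw [hr] at hbO
        exact (Int.odd_mul.mp hbO).1
      obtain ⟨t, ht⟩ := hg2
      have htev : (2 : ℤ) ∣ t := by
        have h2d : (2 : ℤ) ∣ (g : ℤ) * t := ⟨c, by linarith⟩
        rcases (Int.prime_two.dvd_mul).mp h2d with hh | hh
        · exfalso
          obtain ⟨m, hm⟩ := godd
          obtain ⟨q, hq⟩ := hh
          omega
        · exact hh
      obtain ⟨s, hs⟩ := htev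
      have hcg : c = (g : ℤ) * s := by
        have : 2 * c = 2 * ((g : ℤ) * s) := by rw [ht, hs]; ring
        exact mul_left_cancel₀ two_ne_zero this
      have hbez := Int.gcd_eq_gcd_ab b (2 * c)
      rw [← hg] at hbez
      refine ⟨Int.gcdA b (2 * c) * s, -(Int.gcdB b (2 * c) * s), ?_⟩
      linear_combination (-s) * hbez - hcg
    have kodd : Odd k := by
      have : Odd (b * k) := by
        rw [hkj]
        have : c + 2 * c * j = c * (2 * j + 1) := by ring
        rw [this]
        exact hcO.mul (⟨j, by ring⟩)
      exact (Int.odd_mul.mp this).2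
    obtain ⟨t0, ht0⟩ := kodd
    -- shifted flips
    have ushift : ∀ n, b ∈ S (n + b * k) ↔ b ∉ S n := by
      intro n
      have e : n + b * k = (n + b) + t0 * (2 * b) := by rw [ht0]; ring
      rw [e, uper t0 (n + b)]
      exact flipu n
    have vshift : ∀ n, c ∈ S (n + b * k) ↔ c ∉ S n := by
      intro n
      have e : n + b * k = (n + c) + j * (2 * c) := by rw [hkj]; ring
      rw [e, vper j (n + c)]
      exact flipv n
    -- key claim: c-membership is b-periodic
    have P : ∀ m, c ∈ S (m + b) ↔ c ∈ S m := by
      intro m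
      by_cases hu : b ∈ S m
      · have hnu : b ∉ S (m + b * k) := by
          intro hmem
          exact (ushift m).mp hmem hu
        have h1 := crossv (m + b * k) hnu
        have h2 := vshift m
        have h3 := vshift (m + b)
        have e : m + b * k + b = (m + b) + b * k := by ring
        rw [e] at h1
        tauto
      · exact crossv m hu
    have vbper : ∀ (t : ℤ) (n : ℤ), c ∈ S (n + t * b) ↔ c ∈ S n := by
      intro t
      induction t using Int.induction_on with
      | zero => intro n; norm_num
      | succ k' ih =>
        intro n
        have e : n + ((k' : ℤ) + 1) * b = (n + (k' : ℤ) * b) + b := by ring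
        rw [e, P _]
        exact ih n
      | pred k' ih =>
        intro n
        have e : (n + (-(k' : ℤ) - 1) * b) + b = n + (-(k' : ℤ)) * b := by ring
        have h2 := P (n + (-(k' : ℤ) - 1) * b)
        rw [e] at h2
        exact h2.symm.trans (ih n)
    have hfin1 := vbper k 0
    have hfin2 := vshift 0
    rw [mul_comm] at hfin1
    tauto
  -- existence: S 1 contains an odd element
  obtain ⟨x, hx1, hxodd⟩ : ∃ x ∈ S 1, Odd x := by
    by_contra hall
    push_neg at hall
    have : Even (∑ b ∈ S 1, b) := by
      apply Finset.even_sum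
      intro i hi
      have := hall i hi
      exact Int.not_odd_iff_even.mp this
    rw [hsum 1] at this
    exact (by decide : ¬ Even (1:ℤ)) this
  have hxB : x ∈ B := hsub 1 hx1
  exact ⟨x, ⟨hxB, hxodd⟩, fun y hy => key y x hy.1 hxB hy.2 hxodd⟩
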